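/- Let G be a minimal candidate with bipartition (A,B). If two distinct vertices b_1, b_2 ∈ B have a common neighbour in A, then they have at least two common neighbours in A. -/

import Mathlib

open SimpleGraph Function

/-- `G` has a `K_t` minor: there are `t` nonempty, pairwise disjoint "branch sets",
each inducing a connected subgraph, with an edge of `G` between any two of them.
(This is the "`t`-cluster" formulation, equivalent to `K_t` being obtainable from a
subgraph of `G` by contracting edges.) -/
def HasCliqueMinor {V : Type*} (G : SimpleGraph V) (t : ℕ) : Prop :=
  ∃ f : Fin t → Set V,
    (∀ i, (f i).Nonempty) ∧
    (∀ i, (G.induce (f i)).Connected) ∧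
    (Pairwise fun i j => Disjoint (f i) (f j)) ∧
    ∀ i j, i ≠ j → ∃ u ∈ f i, ∃ v ∈ f j, G.Adj u v

/-- `(A, B)` is a bipartition of `G`: the parts partition the vertex set and
every edge joins `A` to `B`. -/
def IsBipartitionWith {V : Type*} (G : SimpleGraph V) (A B : Set V) : Prop :=
  (∀ v, v ∈ A ∨ v ∈ B) ∧ (∀ v, ¬(v ∈ A ∧ v ∈ B)) ∧
    ∀ ⦃u v⦄, G.Adj u v → (u ∈ A ↔ v ∈ B)

/-- A candidate: a graph with a bipartition `(A,B)`, `|A| ≥ |B| > 0`, every vertex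
of `A` of degree at least six, and no `K_6` minor. -/
def IsCandidate {V : Type*} (G : SimpleGraph V) (A B : Set V) : Prop :=
  IsBipartitionWith G A B ∧ B.ncard ≤ A.ncard ∧ B.Nonempty ∧
    (∀ a ∈ A, 6 ≤ (G.neighborSet a).ncard) ∧ ¬ HasCliqueMinor G 6

/-- A minimal candidate: a candidate minimizing `|V(G)| + |E(G)|` among all
(finite) candidates. -/
def IsMinimalCandidate {V : Type*} [Fintype V] (G : SimpleGraph V) (A B : Set V) : Prop :=
  IsCandidate G A B ∧
    ∀ (n : ℕ) (G' : SimpleGraph (Fin n)) (A' B' : Set (Fin n)),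
      IsCandidate G' A' B' →
        Fintype.card V + G.edgeSet.ncard ≤ n + G'.edgeSet.ncard

private lemma reachable_map_aux {α β : Type*} {G : SimpleGraph α} {H : SimpleGraph β}
    (f : α → β) (h : ∀ x y, G.Adj x y → H.Reachable (f x) (f y)) :
    ∀ {x y}, G.Reachable x y → H.Reachable (f x) (f y) := by
  intro x y hr
  obtain ⟨w⟩ := hr
  induction w with
  | nil => exact Reachable.refl _
  | cons ha p ih => exact (h _ _ ha).trans ih


/-- In a minimal candidate, two distinct vertices of `B` with a common neighbour in `A`
have at least two common neighbours in `A`. -/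
theorem minimalCandidate_two_common_neighbours {V : Type} [Fintype V] (G : SimpleGraph V)
    (A B : Set V) (hmin : IsMinimalCandidate G A B) (b₁ b₂ : V) (hb₁ : b₁ ∈ B)
    (hb₂ : b₂ ∈ B) (hne : b₁ ≠ b₂) (hcommon : ∃ a ∈ A, G.Adj a b₁ ∧ G.Adj a b₂) :
    2 ≤ {a | a ∈ A ∧ G.Adj a b₁ ∧ G.Adj a b₂}.ncard := by
  classical
  by_contra hlt
  push_neg at hlt
  obtain ⟨cand, hminimal⟩ := hmin
  obtain ⟨⟨hcover, hnotboth, hedge⟩, hBA, -, hdeg, hK6⟩ := cand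
  obtain ⟨a, haA, ha1, ha2⟩ := hcommon
  have hS : a ∈ {a | a ∈ A ∧ G.Adj a b₁ ∧ G.Adj a b₂} := ⟨haA, ha1, ha2⟩
  -- uniqueness of the common neighbour
  have huniq : ∀ x, G.Adj x b₁ → G.Adj x b₂ → x = a := by
    intro x h1 h2
    have hxA : x ∈ A := (hedge h1).2 hb₁
    by_contra hxa
    have : 1 < {a | a ∈ A ∧ G.Adj a b₁ ∧ G.Adj a b₂}.ncard :=
      (Set.one_lt_ncard (Set.toFinite _)).2 ⟨x, ⟨hxA, h1, h2⟩, a, hS, hxa⟩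
    omega
  have hb₁A : b₁ ∉ A := fun h => hnotboth b₁ ⟨h, hb₁⟩
  have hb₂A : b₂ ∉ A := fun h => hnotboth b₂ ⟨h, hb₂⟩
  have haB : a ∉ B := fun h => hnotboth a ⟨haA, h⟩
  have hab₁ : a ≠ b₁ := fun h => hb₁A (h ▸ haA)
  have hab₂ : a ≠ b₂ := fun h => hb₂A (h ▸ haA)
  have hnadj12 : ¬ G.Adj b₁ b₂ := fun h => hb₁A ((hedge h).2 hb₂)
  have hnadj2b : ¬ G.Adj b₂ b₁ := fun h => hnadj12 h.symm
  -- the deleted set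
  set s : Set V := {a, b₂} with hs_def
  haveI : Fintype ↥(sᶜ) := Fintype.ofFinite _
  set n : ℕ := Nat.card ↥(sᶜ) with hn_def
  have e : ↥(sᶜ) ≃ Fin n := Finite.equivFin _
  set ι : Fin n → V := fun i => ((e.symm i : ↥(sᶜ)) : V) with hι_def
  have hι : Injective ι := Subtype.val_injective.comp e.symm.injective
  have hιmem : ∀ i, ι i ∈ sᶜ := fun i => (e.symm i).2
  have hι_not_a : ∀ i, ι i ≠ a := by
    intro i h
    have := hιmem i
    simp [hs_def, h] at this
  have hι_not_b₂ : ∀ i, ι i ≠ b₂ := by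
    intro i h
    have := hιmem i
    simp [hs_def, h] at this
  have hb₁mem : b₁ ∈ sᶜ := by
    simp only [hs_def, Set.mem_compl_iff, Set.mem_insert_iff, Set.mem_singleton_iff]
    push_neg
    exact ⟨fun h => hab₁ h.symm, hne⟩
  set k : Fin n := e ⟨b₁, hb₁mem⟩ with hk_def
  have hk : ι k = b₁ := by simp [hι_def, hk_def]
  -- the contracted graph
  set G' : SimpleGraph (Fin n) :=
    { Adj := fun i j =>
        G.Adj (ι i) (ι j) ∨ (ι i = b₁ ∧ G.Adj b₂ (ι j)) ∨ (ι j = b₁ ∧ G.Adj b₂ (ι i))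
      symm := by
        refine ⟨fun i j h => ?_⟩
        rcases h with h | ⟨h1, h2⟩ | ⟨h1, h2⟩
        · exact Or.inl h.symm
        · exact Or.inr (Or.inr ⟨h1, h2⟩)
        · exact Or.inr (Or.inl ⟨h1, h2⟩)
      loopless := by
        refine ⟨fun i h => ?_⟩
        rcases h with h | ⟨h1, h2⟩ | ⟨h1, h2⟩
        · exact G.loopless.irrefl _ h
        · exact hnadj2b (h1 ▸ h2)
        · exact hnadj2b (h1 ▸ h2) } with hG'_def
  have hG' : ∀ i j, G'.Adj i j ↔
      (G.Adj (ι i) (ι j) ∨ (ι i = b₁ ∧ G.Adj b₂ (ι j)) ∨ (ι j = b₁ ∧ G.Adj b₂ (ι i))) :=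
    fun i j => Iff.rfl
  set A' : Set (Fin n) := ι ⁻¹' A with hA'_def
  set B' : Set (Fin n) := ι ⁻¹' B with hB'_def
  -- bipartition
  have hbip : IsBipartitionWith G' A' B' := by
    refine ⟨fun i => hcover (ι i), fun i h => hnotboth (ι i) h, ?_⟩
    intro i j hadj
    rcases (hG' i j).1 hadj with h | ⟨h1, h2⟩ | ⟨h1, h2⟩
    · exact hedge h
    · have hiB : ι i ∈ B := by rw [h1]; exact hb₁
      have hiA : ι i ∉ A := fun h => hnotboth _ ⟨h, hiB⟩
      have hjB : ι j ∉ B := fun h => hb₂A ((hedge h2).2 h)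
      exact iff_of_false hiA hjB
    · have hjB : ι j ∈ B := by rw [h1]; exact hb₁
      have hiB : ι i ∉ B := fun h => hb₂A ((hedge h2).2 h)
      have hiA : ι i ∈ A := (hcover _).resolve_right hiB
      exact iff_of_true hiA hjB
  -- range of ι
  have hrange : Set.range ι = sᶜ := by
    ext w
    constructor
    · rintro ⟨i, rfl⟩; exact hιmem i
    · intro hw; exact ⟨e ⟨w, hw⟩, by simp [hι_def]⟩
  have himgA : ι '' A' = A \ s := by
    rw [hA'_def, Set.image_preimage_eq_inter_range, hrange, ← Set.diff_eq]
  have himgB : ι '' B' = B \ s := by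
    rw [hB'_def, Set.image_preimage_eq_inter_range, hrange, ← Set.diff_eq]
  have hA's : A \ s = A \ {a} := by
    ext x
    simp only [hs_def, Set.mem_diff, Set.mem_insert_iff, Set.mem_singleton_iff]
    constructor
    · rintro ⟨h1, h2⟩; exact ⟨h1, fun h => h2 (Or.inl h)⟩
    · rintro ⟨h1, h2⟩; exact ⟨h1, fun h => h.elim h2 (fun hb => hb₂A (hb ▸ h1))⟩
  have hB's : B \ s = B \ {b₂} := by
    ext x
    simp only [hs_def, Set.mem_diff, Set.mem_insert_iff, Set.mem_singleton_iff]
    constructor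
    · rintro ⟨h1, h2⟩; exact ⟨h1, fun h => h2 (Or.inr h)⟩
    · rintro ⟨h1, h2⟩; exact ⟨h1, fun h => h.elim (fun ha' => haB (ha' ▸ h1)) h2⟩
  have hAcard : A'.ncard = A.ncard - 1 := by
    calc A'.ncard = (ι '' A').ncard := (Set.ncard_image_of_injective _ hι).symm
      _ = (A \ {a}).ncard := by rw [himgA, hA's]
      _ = A.ncard - 1 := Set.ncard_diff_singleton_of_mem haA
  have hBcard : B'.ncard = B.ncard - 1 := by
    calc B'.ncard = (ι '' B').ncard := (Set.ncard_image_of_injective _ hι).symm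
      _ = (B \ {b₂}).ncard := by rw [himgB, hB's]
      _ = B.ncard - 1 := Set.ncard_diff_singleton_of_mem hb₂
  have hBA' : B'.ncard ≤ A'.ncard := by
    rw [hAcard, hBcard]; exact Nat.sub_le_sub_right hBA 1
  have hB'ne : B'.Nonempty := ⟨k, show ι k ∈ B from by rw [hk]; exact hb₁⟩
  -- degrees
  have hdeg' : ∀ i ∈ A', 6 ≤ (G'.neighborSet i).ncard := by
    intro i hiA
    have hva : ι i ≠ a := hι_not_a i
    set ρ : V → Fin n := fun w => if h : w ∈ sᶜ then e ⟨w, h⟩ else k with hρ_def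
    have hρ1 : ∀ w (h : w ∈ sᶜ), ι (ρ w) = w := by
      intro w h
      have hw : ρ w = e ⟨w, h⟩ := dif_pos h
      rw [hw]
      show ((e.symm (e ⟨w, h⟩) : ↥(sᶜ)) : V) = w
      rw [Equiv.symm_apply_apply]
    have hρb₂ : ρ b₂ = k := by
      have hmem : b₂ ∉ sᶜ := by simp [hs_def]
      exact dif_neg hmem
    have hBne : ∀ (u : V), G.Adj (ι i) u → u ≠ a := fun u hu h =>
      haB (h ▸ (hedge hu).1 hiA)
    have key : ∀ w : ↥(G.neighborSet (ι i)), ρ w.1 ∈ G'.neighborSet i := by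
      rintro ⟨w, hw⟩
      have hw' : G.Adj (ι i) w := hw
      have hwa : w ≠ a := hBne w hw'
      by_cases hwb : w = b₂
      · subst hwb
        rw [hρb₂]
        exact (hG' i k).2 (Or.inr (Or.inr ⟨hk, hw'.symm⟩))
      · have hwmem : w ∈ sᶜ := by simp [hs_def, hwa, hwb]
        exact (hG' _ _).2 (Or.inl (by rw [hρ1 w hwmem]; exact hw'))
    have hFinj : Injective (fun w : ↥(G.neighborSet (ι i)) =>
        (⟨ρ w.1, key w⟩ : ↥(G'.neighborSet i))) := by
      rintro ⟨w, hw⟩ ⟨w', hw'⟩ hEq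
      have hEq' : ρ w = ρ w' := congrArg Subtype.val hEq
      have bad : ∀ (u u' : V), G.Adj (ι i) u → G.Adj (ι i) u' → u = b₂ → u' ≠ b₂ →
          ρ u = ρ u' → False := by
        intro u u' hu hu' h1 h2 hρeq
        have hm : u' ∈ sᶜ := by simp [hs_def, hBne u' hu', h2]
        have : ι (ρ u') = u' := hρ1 _ hm
        rw [← hρeq, h1, hρb₂, hk] at this
        exact hva (huniq (ι i) (this ▸ hu') (h1 ▸ hu))
      by_cases h1 : w = b₂ <;> by_cases h2 : w' = b₂
      · exact Subtype.ext (h1.trans h2.symm)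
      · exact absurd hEq' (fun h => bad w w' hw hw' h1 h2 h)
      · exact absurd hEq'.symm (fun h => bad w' w hw' hw h2 h1 h)
      · have hm : w ∈ sᶜ := by simp [hs_def, hBne w hw, h1]
        have hm' : w' ∈ sᶜ := by simp [hs_def, hBne w' hw', h2]
        have hvv : ι (ρ w) = ι (ρ w') := by rw [hEq']
        exact Subtype.ext ((hρ1 w hm).symm.trans (hvv.trans (hρ1 w' hm')))
    have h6 : 6 ≤ (G.neighborSet (ι i)).ncard := hdeg _ hiA
    have hle := Nat.card_le_card_of_injective _ hFinj
    rw [Nat.card_coe_set_eq, Nat.card_coe_set_eq] at hle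
    omega
  have indAdj : ∀ (T : Set V) (u v : ↥T), G.Adj u.1 v.1 → (G.induce T).Adj u v := by
    intro T u v h; simpa using h
  -- no K6 minor
  have hK6' : ¬ HasCliqueMinor G' 6 := by
    rintro ⟨f, hne', hconn, hdisj, hadjp⟩
    apply hK6
    obtain ⟨g, hg_def⟩ : ∃ g : Fin 6 → Set V,
        g = fun m => ι '' f m ∪ (if k ∈ f m then ({a, b₂} : Set V) else ∅) := ⟨_, rfl⟩
    have hg : ∀ m, g m = ι '' f m ∪ (if k ∈ f m then ({a, b₂} : Set V) else ∅) := by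
      intro m; rw [hg_def]
    have hsub : ∀ m, ∀ i ∈ f m, ι i ∈ g m := by
      intro m i hi; rw [hg m]; exact Set.mem_union_left _ ⟨i, hi, rfl⟩
    have hextra : ∀ m, k ∈ f m → a ∈ g m ∧ b₂ ∈ g m := by
      intro m hk'
      rw [hg m]
      constructor <;> (apply Set.mem_union_right; rw [if_pos hk']; simp)
    have hpairimg : ∀ t : Set (Fin n), Disjoint ({a, b₂} : Set V) (ι '' t) := by
      intro t
      rw [Set.disjoint_left]
      rintro x hx ⟨i, -, rfl⟩
      simp only [Set.mem_insert_iff, Set.mem_singleton_iff] at hx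
      rcases hx with h' | h'
      · exact hι_not_a i h'
      · exact hι_not_b₂ i h'
    refine ⟨g, ?_, ?_, ?_, ?_⟩
    · intro m
      obtain ⟨x, hx⟩ := hne' m
      exact ⟨ι x, hsub m x hx⟩
    · -- connectivity
      intro m
      obtain ⟨x₀, hx₀⟩ := hne' m
      have step : ∀ x y : ↥(f m), (G'.induce (f m)).Adj x y →
          (G.induce (g m)).Reachable ⟨ι x.1, hsub m _ x.2⟩ ⟨ι y.1, hsub m _ y.2⟩ := by
        intro x y hxy
        have hxy' : G'.Adj x.1 y.1 := by simpa using hxy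
        rcases (hG' _ _).1 hxy' with h | ⟨h1, h2⟩ | ⟨h1, h2⟩
        · exact (indAdj (g m) ⟨ι x.1, hsub m _ x.2⟩ ⟨ι y.1, hsub m _ y.2⟩ h).reachable
        · have hxk : x.1 = k := hι (h1.trans hk.symm)
          have hkm : k ∈ f m := hxk ▸ x.2
          obtain ⟨hag, hb2g⟩ := hextra m hkm
          have r1 : (G.induce (g m)).Adj ⟨ι x.1, hsub m _ x.2⟩ ⟨a, hag⟩ :=
            indAdj _ _ _ (show G.Adj (ι x.1) a by rw [h1]; exact ha1.symm)
          have r2 : (G.induce (g m)).Adj ⟨a, hag⟩ ⟨b₂, hb2g⟩ := indAdj _ _ _ ha2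
          have r3 : (G.induce (g m)).Adj ⟨b₂, hb2g⟩ ⟨ι y.1, hsub m _ y.2⟩ := indAdj _ _ _ h2
          exact (r1.reachable.trans r2.reachable).trans r3.reachable
        · have hyk : y.1 = k := hι (h1.trans hk.symm)
          have hkm : k ∈ f m := hyk ▸ y.2
          obtain ⟨hag, hb2g⟩ := hextra m hkm
          have r1 : (G.induce (g m)).Adj ⟨ι y.1, hsub m _ y.2⟩ ⟨a, hag⟩ :=
            indAdj _ _ _ (show G.Adj (ι y.1) a by rw [h1]; exact ha1.symm)
          have r2 : (G.induce (g m)).Adj ⟨a, hag⟩ ⟨b₂, hb2g⟩ := indAdj _ _ _ ha2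
          have r3 : (G.induce (g m)).Adj ⟨b₂, hb2g⟩ ⟨ι x.1, hsub m _ x.2⟩ := indAdj _ _ _ h2
          exact ((r1.reachable.trans r2.reachable).trans r3.reachable).symm
      have reach_img : ∀ (x : Fin n) (hx : x ∈ f m),
          (G.induce (g m)).Reachable ⟨ι x, hsub m x hx⟩ ⟨ι x₀, hsub m x₀ hx₀⟩ := by
        intro x hx
        exact reachable_map_aux (fun z : ↥(f m) => (⟨ι z.1, hsub m _ z.2⟩ : ↥(g m)))
          step ((hconn m).preconnected ⟨x, hx⟩ ⟨x₀, hx₀⟩)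
      have reach_base : ∀ u : ↥(g m), (G.induce (g m)).Reachable u ⟨ι x₀, hsub m x₀ hx₀⟩ := by
        rintro ⟨u, hu⟩
        rw [hg m] at hu
        rcases hu with ⟨x, hx, rfl⟩ | hex
        · exact reach_img x hx
        · by_cases hkm : k ∈ f m
          · rw [if_pos hkm] at hex
            obtain ⟨hag, hb2g⟩ := hextra m hkm
            have rb : (G.induce (g m)).Reachable ⟨ι k, hsub m k hkm⟩ ⟨ι x₀, hsub m x₀ hx₀⟩ :=
              reach_img k hkm
            have ra : (G.induce (g m)).Adj ⟨a, hag⟩ ⟨ι k, hsub m k hkm⟩ :=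
              indAdj _ _ _ (show G.Adj a (ι k) by rw [hk]; exact ha1)
            simp only [Set.mem_insert_iff, Set.mem_singleton_iff] at hex
            rcases hex with h' | h'
            · have r0 : (G.induce (g m)).Adj ⟨u, by rw [h']; exact hag⟩ ⟨ι k, hsub m k hkm⟩ :=
                indAdj _ _ _ (show G.Adj u (ι k) by rw [h', hk]; exact ha1)
              exact r0.reachable.trans rb
            · have r0 : (G.induce (g m)).Adj ⟨u, by rw [h']; exact hb2g⟩ ⟨a, hag⟩ :=
                indAdj _ _ _ (show G.Adj u a by rw [h']; exact ha2.symm)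
              exact r0.reachable.trans (ra.reachable.trans rb)
          · rw [if_neg hkm] at hex
            exact absurd hex (Set.notMem_empty u)
      haveI : Nonempty ↥(g m) := ⟨⟨ι x₀, hsub m x₀ hx₀⟩⟩
      exact ⟨fun u v => (reach_base u).trans (reach_base v).symm⟩
    · -- disjointness
      intro m m' hmm'
      have hd := hdisj hmm'
      have himg : Disjoint (ι '' f m) (ι '' f m') := (Set.disjoint_image_iff hι).2 hd
      rw [hg m, hg m']
      by_cases hk1 : k ∈ f m <;> by_cases hk2 : k ∈ f m'
      · exact ((Set.disjoint_left.mp hd hk1) hk2).elim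
      · rw [if_pos hk1, if_neg hk2, Set.union_empty, Set.disjoint_union_left]
        exact ⟨himg, hpairimg _⟩
      · rw [if_neg hk1, if_pos hk2, Set.union_empty, Set.disjoint_union_right]
        exact ⟨himg, (hpairimg _).symm⟩
      · rw [if_neg hk1, if_neg hk2, Set.union_empty, Set.union_empty]
        exact himg
    · intro m m' hmm'
      obtain ⟨i, hi, j, hj, hij⟩ := hadjp m m' hmm'
      rcases (hG' _ _).1 hij with h | ⟨h1, h2⟩ | ⟨h1, h2⟩
      · exact ⟨ι i, hsub m i hi, ι j, hsub m' j hj, h⟩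
      · have hik : i = k := hι (h1.trans hk.symm)
        have hkm : k ∈ f m := hik ▸ hi
        exact ⟨b₂, (hextra m hkm).2, ι j, hsub m' j hj, h2⟩
      · have hjk : j = k := hι (h1.trans hk.symm)
        have hkm : k ∈ f m' := hjk ▸ hj
        exact ⟨ι i, hsub m i hi, b₂, (hextra m' hkm).2, h2.symm⟩
  have cand' : IsCandidate G' A' B' := ⟨hbip, hBA', hB'ne, hdeg', hK6'⟩
  -- edge count comparison
  have hE : G'.edgeSet.ncard ≤ G.edgeSet.ncard := by
    obtain ⟨ρ', hρ'_def⟩ : ∃ ρ' : Fin n → V,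
        ρ' = fun i => if ι i = b₁ then b₂ else ι i := ⟨_, rfl⟩
    obtain ⟨F, hF_def⟩ : ∃ F : Sym2 (Fin n) → Sym2 V,
        F = fun z => if z.map ι ∈ G.edgeSet then z.map ι else z.map ρ' := ⟨_, rfl⟩
    have hclass : ∀ i j, G'.Adj i j → ¬ G.Adj (ι i) (ι j) →
        ((ι i = b₁ ∧ G.Adj b₂ (ι j) ∧ ι j ≠ b₁) ∨
          (ι j = b₁ ∧ G.Adj b₂ (ι i) ∧ ι i ≠ b₁)) := by
      intro i j hadj hnadj
      rcases (hG' i j).1 hadj with h | ⟨h1, h2⟩ | ⟨h1, h2⟩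
      · exact absurd h hnadj
      · exact Or.inl ⟨h1, h2, fun h => hnadj2b (h ▸ h2)⟩
      · exact Or.inr ⟨h1, h2, fun h => hnadj2b (h ▸ h2)⟩
    have hFB : ∀ i j, ι i = b₁ → G.Adj b₂ (ι j) → ι j ≠ b₁ → F s(i, j) = s(b₂, ι j) := by
      intro i j h1 h2 h3
      have hnb : (s(i, j) : Sym2 (Fin n)).map ι ∉ G.edgeSet := by
        rw [Sym2.map_pair_eq, SimpleGraph.mem_edgeSet, h1]
        intro h
        exact hι_not_a j (huniq (ι j) h.symm h2.symm)
      have e1 : ρ' i = b₂ := by rw [hρ'_def]; exact if_pos h1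
      have e2 : ρ' j = ι j := by rw [hρ'_def]; exact if_neg h3
      rw [hF_def]
      show (if (s(i, j) : Sym2 (Fin n)).map ι ∈ G.edgeSet then _ else _) = _
      rw [if_neg hnb, Sym2.map_pair_eq, e1, e2]
    have hnorm : ∀ i j, G'.Adj i j → (s(i, j) : Sym2 (Fin n)).map ι ∉ G.edgeSet →
        ∃ p q : Fin n, (s(i, j) : Sym2 (Fin n)) = s(p, q) ∧ ι p = b₁ ∧ G.Adj b₂ (ι q) ∧
          F s(i, j) = s(b₂, ι q) := by
      intro i j hadj hc
      have hnadj : ¬ G.Adj (ι i) (ι j) := by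
        rwa [Sym2.map_pair_eq, SimpleGraph.mem_edgeSet] at hc
      rcases hclass i j hadj hnadj with ⟨h1, h2, h3⟩ | ⟨h1, h2, h3⟩
      · exact ⟨i, j, rfl, h1, h2, hFB i j h1 h2 h3⟩
      · exact ⟨j, i, Sym2.eq_swap, h1, h2, by
          rw [show (s(i, j) : Sym2 (Fin n)) = s(j, i) from Sym2.eq_swap]
          exact hFB j i h1 h2 h3⟩
    have hmap : ∀ z ∈ G'.edgeSet, F z ∈ G.edgeSet := by
      intro z hz
      induction z using Sym2.ind with
      | _ i j =>
        rw [SimpleGraph.mem_edgeSet] at hz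
        by_cases hc : (s(i, j) : Sym2 (Fin n)).map ι ∈ G.edgeSet
        · rw [hF_def]
          show (if (s(i, j) : Sym2 (Fin n)).map ι ∈ G.edgeSet then _ else _) ∈ _
          rw [if_pos hc]; exact hc
        · obtain ⟨p, q, hzeq, hp, hq, hFz⟩ := hnorm i j hz hc
          rw [hFz, SimpleGraph.mem_edgeSet]
          exact hq
    have hinj : Set.InjOn F G'.edgeSet := by
      intro z₁ h₁ z₂ h₂ hF12
      induction z₁ using Sym2.ind with
      | _ i j =>
      induction z₂ using Sym2.ind with
      | _ i' j' =>
        rw [SimpleGraph.mem_edgeSet] at h₁ h₂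
        by_cases c₁ : (s(i, j) : Sym2 (Fin n)).map ι ∈ G.edgeSet <;>
          by_cases c₂ : (s(i', j') : Sym2 (Fin n)).map ι ∈ G.edgeSet
        · rw [hF_def] at hF12
          simp only [if_pos c₁, if_pos c₂] at hF12
          exact Sym2.map.injective hι hF12
        · obtain ⟨p, q, hzeq, hp, hq, hFz⟩ := hnorm i' j' h₂ c₂
          rw [hFz, hF_def] at hF12
          simp only [if_pos c₁] at hF12
          rw [Sym2.map_pair_eq] at hF12
          rcases Sym2.eq_iff.1 hF12 with ⟨h, -⟩ | ⟨-, h⟩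
          · exact absurd h (hι_not_b₂ i)
          · exact absurd h (hι_not_b₂ j)
        · obtain ⟨p, q, hzeq, hp, hq, hFz⟩ := hnorm i j h₁ c₁
          rw [hFz, hF_def] at hF12
          simp only [if_pos c₂] at hF12
          rw [Sym2.map_pair_eq] at hF12
          rcases Sym2.eq_iff.1 hF12.symm with ⟨h, -⟩ | ⟨-, h⟩
          · exact absurd h (hι_not_b₂ i')
          · exact absurd h (hι_not_b₂ j')
        · obtain ⟨p, q, hzeq, hp, hq, hFz⟩ := hnorm i j h₁ c₁
          obtain ⟨p', q', hzeq', hp', hq', hFz'⟩ := hnorm i' j' h₂ c₂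
          rw [hFz, hFz'] at hF12
          rcases Sym2.eq_iff.1 hF12 with ⟨-, h⟩ | ⟨h, -⟩
          · have hq12 : q = q' := hι h
            have hp12 : p = p' := hι (hp.trans hp'.symm)
            rw [hzeq, hzeq', hp12, hq12]
          · exact absurd h.symm (hι_not_b₂ q')
    exact Set.ncard_le_ncard_of_injOn F hmap hinj (Set.toFinite _)
  have hn : n < Fintype.card V := by
    have h1 : n = (sᶜ).ncard := by rw [hn_def, Nat.card_coe_set_eq]
    have h2 : sᶜ ⊂ Set.univ := by
      rw [Set.ssubset_univ_iff]
      intro h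
      have ha' : a ∈ sᶜ := h ▸ Set.mem_univ a
      simp [hs_def] at ha'
    have h3 := Set.ncard_lt_ncard h2 (Set.toFinite _)
    rw [Set.ncard_univ, Nat.card_eq_fintype_card] at h3
    omega
  have hfinal := hminimal n G' A' B' cand'
  omega
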